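/- arXiv:0812.1898 — 5 statements merged into one kernel-verified Lean document; each statement's English description precedes it below -/
import Mathlib

section
/- Define the relation R on K by R s t ↔ (s ≤ t or s - t is limited). Then: (i) R is reflexive; (ii) R is transitive; (iii) R is total (for all s t, R s t or R t s); (iv) for all s t, (R s t and R t s) holds if and only if s - t is limited; (v) R is translation invariant: R s t implies R (s + u) (t + u) for every u : K. Consequently R descends to a linear order on the quotient additive group K ⧸ Gal(0) which is compatible with addition, making Gal(K) := K ⧸ Gal(0) an ordered additive group. -/
variable {K : Type*} [Field K] [LinearOrder K] [IsStrictOrderedRing K]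

/-- `s : K` is limited: `|s| ≤ f r` for some real `r > 0`. -/
def IsLimited (f : ℝ →+* K) (s : K) : Prop := ∃ r : ℝ, 0 < r ∧ |s| ≤ f r

/-- `Gal(0)`: the additive subgroup of limited elements of `K`. -/
def Gal0 (f : ℝ →+* K) : AddSubgroup K where
  carrier := {s | IsLimited f s}
  zero_mem' := ⟨1, one_pos, by simp⟩
  add_mem' := by
    rintro a b ⟨r, hr, ha⟩ ⟨r', hr', hb⟩
    exact ⟨r + r', by positivity, by
      calc |a + b| ≤ |a| + |b| := abs_add_le a b
        _ ≤ f r + f r' := add_le_add ha hb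
        _ = f (r + r') := (map_add f r r').symm⟩
  neg_mem' := by
    rintro a ⟨r, hr, ha⟩
    exact ⟨r, hr, by simpa using ha⟩

private lemma f_pos (f : ℝ →+* K) {r : ℝ} (hr : 0 < r) : 0 < f r := by
  have h1 : f r = (f (Real.sqrt r))^2 := by rw [← map_pow, Real.sq_sqrt hr.le]
  have h2 : f r ≠ 0 := by
    intro h
    exact hr.ne' (f.injective (by simpa using h))
  have := sq_nonneg (f (Real.sqrt r))
  rw [← h1] at this
  exact lt_of_le_of_ne this (Ne.symm h2)

private lemma lim_of_le (f : ℝ →+* K) {a g g' : K} (hg : IsLimited f g) (hg' : IsLimited f g')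
    (h1 : a ≤ g) (h2 : -a ≤ g') : IsLimited f a := by
  obtain ⟨r, hr, hgr⟩ := hg
  obtain ⟨r', hr', hgr'⟩ := hg'
  rcases le_total 0 a with h | h
  · exact ⟨r, hr, by rw [abs_of_nonneg h]; exact h1.trans ((le_abs_self g).trans hgr)⟩
  · exact ⟨r', hr', by rw [abs_of_nonpos h]; exact h2.trans ((le_abs_self g').trans hgr')⟩

private lemma R_iff (f : ℝ →+* K) (s t : K) :
    (s ≤ t ∨ IsLimited f (s - t)) ↔ ∃ g ∈ Gal0 f, s - t ≤ g := by
  constructor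
  · rintro (h | hl)
    · exact ⟨0, (Gal0 f).zero_mem, by linarith⟩
    · exact ⟨s - t, hl, le_refl _⟩
  · rintro ⟨g, hg, hle⟩
    rcases le_total s t with h | h
    · exact Or.inl h
    · refine Or.inr (lim_of_le f hg (Gal0 f).zero_mem hle ?_)
      simp only [neg_sub]; linarith

theorem galaxy_order (f : ℝ →+* K) (hf : ¬ Function.Surjective f) :
    let R : K → K → Prop := fun s t => s ≤ t ∨ IsLimited f (s - t)
    (∀ s, R s s) ∧
    (∀ s t u, R s t → R t u → R s u) ∧
    (∀ s t, R s t ∨ R t s) ∧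
    (∀ s t, (R s t ∧ R t s) ↔ IsLimited f (s - t)) ∧
    (∀ s t u, R s t → R (s + u) (t + u)) ∧
    (∃ le : (K ⧸ Gal0 f) → (K ⧸ Gal0 f) → Prop,
      (∀ s t : K, le (QuotientAddGroup.mk s) (QuotientAddGroup.mk t) ↔ R s t) ∧
      IsLinearOrder (K ⧸ Gal0 f) le ∧
      (∀ a b c : K ⧸ Gal0 f, le a b → le (a + c) (b + c))) := by
  intro R
  have hrefl : ∀ s, R s s := fun s => Or.inl le_rfl
  have htrans : ∀ s t u, R s t → R t u → R s u := by
    intro s t u hst htu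
    obtain ⟨g, hg, h1⟩ := (R_iff f s t).mp hst
    obtain ⟨g', hg', h2⟩ := (R_iff f t u).mp htu
    exact (R_iff f s u).mpr ⟨g + g', (Gal0 f).add_mem hg hg', by linarith⟩
  have htot : ∀ s t, R s t ∨ R t s := by
    intro s t
    rcases le_total s t with h | h
    · exact Or.inl (Or.inl h)
    · exact Or.inr (Or.inl h)
  have hanti : ∀ s t, (R s t ∧ R t s) ↔ IsLimited f (s - t) := by
    intro s t
    constructor
    · rintro ⟨h1, h2⟩
      obtain ⟨g, hg, hle⟩ := (R_iff f s t).mp h1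
      obtain ⟨g', hg', hle'⟩ := (R_iff f t s).mp h2
      exact lim_of_le f hg hg' hle (by simp only [neg_sub]; linarith)
    · intro h
      refine ⟨Or.inr h, Or.inr ?_⟩
      have := (Gal0 f).neg_mem (show s - t ∈ Gal0 f from h)
      have h' : t - s ∈ Gal0 f := by simpa [neg_sub] using this
      exact h'
  have htransl : ∀ s t u, R s t → R (s + u) (t + u) := by
    intro s t u h
    rcases h with h | h
    · exact Or.inl (by linarith)
    · exact Or.inr (by simpa using h)
  refine ⟨hrefl, htrans, htot, hanti, htransl, ?_⟩
  -- well-definedness on the quotient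
  have hwd : ∀ (a₁ b₁ a₂ b₂ : K),
      -a₁ + a₂ ∈ Gal0 f → -b₁ + b₂ ∈ Gal0 f → R a₁ b₁ = R a₂ b₂ := by
    intro a₁ b₁ a₂ b₂ ha hb
    have key : ∀ (x y x' y' : K), -x + x' ∈ Gal0 f → -y + y' ∈ Gal0 f →
        R x y → R x' y' := by
      intro x y x' y' hx hy h
      obtain ⟨g, hg, hle⟩ := (R_iff f x y).mp h
      refine (R_iff f x' y').mpr ⟨g + (-x + x') + -(-y + y'),
        (Gal0 f).add_mem ((Gal0 f).add_mem hg hx) ((Gal0 f).neg_mem hy), by linarith⟩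
    have hx' := (Gal0 f).neg_mem ha
    have hy' := (Gal0 f).neg_mem hb
    exact propext ⟨key a₁ b₁ a₂ b₂ ha hb,
      key a₂ b₂ a₁ b₁ (by simpa [neg_add_rev] using hx') (by simpa [neg_add_rev] using hy')⟩
  refine ⟨Quotient.lift₂ R (fun a₁ b₁ a₂ b₂ ha hb =>
      hwd a₁ b₁ a₂ b₂ (QuotientAddGroup.leftRel_apply.mp ha)
        (QuotientAddGroup.leftRel_apply.mp hb)), fun s t => Iff.rfl, ?_, ?_⟩
  · refine { refl := ?_, trans := ?_, antisymm := ?_, total := ?_ }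
    · intro a
      obtain ⟨s, rfl⟩ := QuotientAddGroup.mk_surjective a
      exact hrefl s
    · intro a b c
      obtain ⟨s, rfl⟩ := QuotientAddGroup.mk_surjective a
      obtain ⟨t, rfl⟩ := QuotientAddGroup.mk_surjective b
      obtain ⟨u, rfl⟩ := QuotientAddGroup.mk_surjective c
      exact htrans s t u
    · intro a b h1 h2
      obtain ⟨s, rfl⟩ := QuotientAddGroup.mk_surjective a
      obtain ⟨t, rfl⟩ := QuotientAddGroup.mk_surjective b
      have : IsLimited f (s - t) := (hanti s t).mp ⟨h1, h2⟩
      refine QuotientAddGroup.eq.mpr ?_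
      have := (Gal0 f).neg_mem (show s - t ∈ Gal0 f from this)
      simpa [neg_sub, sub_eq_neg_add] using this
    · intro a b
      obtain ⟨s, rfl⟩ := QuotientAddGroup.mk_surjective a
      obtain ⟨t, rfl⟩ := QuotientAddGroup.mk_surjective b
      exact htot s t
  · intro a b c
    obtain ⟨s, rfl⟩ := QuotientAddGroup.mk_surjective a
    obtain ⟨t, rfl⟩ := QuotientAddGroup.mk_surjective b
    obtain ⟨u, rfl⟩ := QuotientAddGroup.mk_surjective c
    exact htransl s t u
end

section
/- (Existence of γ-contractions.) Let (δ, Δ) be galactic space data on a type F and let γ : K be limited with 0 < γ. Then there exist a type F', galactic space data (δ', Δ') on F', and a surjective map g : F → F' which is a γ-contraction, i.e. for all x y : F: (a) if δ x y ≠ ⊤ then δ' (g x) (g y) ≠ ⊤ and γ * f ((δ x y).toReal) - f ((δ' (g x) (g y)).toReal) is infinitesimal; (b) if δ x y = ⊤ then δ' (g x) (g y) = ⊤ if and only if γ * Δ x y is not limited, and if γ * Δ x y is limited then γ * Δ x y - f ((δ' (g x) (g y)).toReal) is infinitesimal; (c) Δ' (g x) (g y) - γ * Δ x y is limited. -/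
universe u

open ENNReal

variable {K : Type*} [Field K] [LinearOrder K] [IsStrictOrderedRing K]

/-- `s : K` is infinitesimal: `|s| < f r` for every real `r > 0`. -/
def IsInfinitesimal (f : ℝ →+* K) (s : K) : Prop := ∀ r : ℝ, 0 < r → |s| < f r

/-- Galactic space data on a type `F`: an extended distance `δ` together with a
galaxy-valued distance `Δ` between metric components, encoded on points. -/
structure GalacticData (K : Type*) [Field K] [LinearOrder K] [IsStrictOrderedRing K] (f : ℝ →+* K) (F : Type*) where
  δ : F → F → ℝ≥0∞
  Δ : F → F → K
  δ_self : ∀ x, δ x x = 0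
  δ_pos : ∀ x y, x ≠ y → 0 < δ x y
  δ_symm : ∀ x y, δ x y = δ y x
  δ_triangle : ∀ x y z, δ x z ≤ δ x y + δ y z
  Δ_congr : ∀ x x' y y', δ x x' ≠ ⊤ → δ y y' ≠ ⊤ → IsLimited f (Δ x y - Δ x' y')
  Δ_symm : ∀ x y, IsLimited f (Δ x y - Δ y x)
  Δ_limited_iff : ∀ x y, IsLimited f (Δ x y) ↔ δ x y ≠ ⊤
  Δ_pos : ∀ x y, δ x y = ⊤ → 0 < Δ x y
  Δ_triangle : ∀ x y z, Δ x z ≤ Δ x y + Δ y z ∨ IsLimited f (Δ x z - (Δ x y + Δ y z))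

/-- `g : F → F'` is a `γ`-contraction between galactic space data. -/
def IsContraction (f : ℝ →+* K) {F F' : Type*}
    (G : GalacticData K f F) (G' : GalacticData K f F') (γ : K) (g : F → F') : Prop :=
  Function.Surjective g ∧
  ∀ x y : F,
    (G.δ x y ≠ ⊤ →
      G'.δ (g x) (g y) ≠ ⊤ ∧
      IsInfinitesimal f (γ * f (G.δ x y).toReal - f (G'.δ (g x) (g y)).toReal)) ∧
    (G.δ x y = ⊤ →
      (G'.δ (g x) (g y) = ⊤ ↔ ¬ IsLimited f (γ * G.Δ x y)) ∧
      (IsLimited f (γ * G.Δ x y) →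
        IsInfinitesimal f (γ * G.Δ x y - f (G'.δ (g x) (g y)).toReal))) ∧
    IsLimited f (G'.Δ (g x) (g y) - γ * G.Δ x y)

section basic
variable (f : ℝ →+* K)

lemma f_strictMono : StrictMono f := by
  intro a b hab
  have h1 : 0 ≤ f (b - a) := by
    have : f (b - a) = f (Real.sqrt (b - a)) ^ 2 := by
      rw [← map_pow, Real.sq_sqrt (by linarith)]
    rw [this]; positivity
  have h0 : f (b - a) ≠ 0 := by
    intro h
    have := f.injective (h.trans (map_zero f).symm)
    linarith
  have : 0 < f b - f a := by
    have := lt_of_le_of_ne h1 (Ne.symm h0)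
    rwa [map_sub] at this
  linarith

variable {f}

lemma f_le_iff {a b : ℝ} : f a ≤ f b ↔ a ≤ b := (f_strictMono f).le_iff_le
lemma f_lt_iff {a b : ℝ} : f a < f b ↔ a < b := (f_strictMono f).lt_iff_lt

lemma f_abs (a : ℝ) : |f a| = f |a| := by
  rcases le_total 0 a with h | h
  · rw [abs_of_nonneg h, abs_of_nonneg]
    rw [← map_zero f]; exact (f_strictMono f).monotone h
  · rw [abs_of_nonpos h, abs_of_nonpos, map_neg]
    rw [← map_zero f]; exact (f_strictMono f).monotone h

lemma f_nonneg {a : ℝ} (h : 0 ≤ a) : 0 ≤ f a := by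
  rw [← map_zero f]; exact (f_strictMono f).monotone h

lemma f_pos_s8 {a : ℝ} (h : 0 < a) : 0 < f a := by
  rw [← map_zero f]; exact f_strictMono f h

lemma IsInfinitesimal.isLimited {s : K} (h : IsInfinitesimal f s) : IsLimited f s :=
  ⟨1, one_pos, (h 1 one_pos).le⟩

lemma isInfinitesimal_zero : IsInfinitesimal f (0 : K) := fun r hr => by
  simpa using f_pos_s8 hr

lemma isLimited_zero : IsLimited f (0 : K) := isInfinitesimal_zero.isLimited

lemma isLimited_f (r : ℝ) : IsLimited f (f r) :=
  ⟨|r| + 1, by positivity, by rw [f_abs]; exact f_le_iff.2 (by linarith)⟩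

lemma IsLimited.add {s t : K} (hs : IsLimited f s) (ht : IsLimited f t) :
    IsLimited f (s + t) := by
  obtain ⟨r, hr, hsr⟩ := hs; obtain ⟨r', hr', htr⟩ := ht
  exact ⟨r + r', by linarith, (abs_add_le _ _).trans (by rw [map_add]; exact add_le_add hsr htr)⟩

lemma IsLimited.neg {s : K} (hs : IsLimited f s) : IsLimited f (-s) := by
  obtain ⟨r, hr, hsr⟩ := hs; exact ⟨r, hr, by rwa [abs_neg]⟩

lemma IsLimited.mul {s t : K} (hs : IsLimited f s) (ht : IsLimited f t) :
    IsLimited f (s * t) := by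
  obtain ⟨r, hr, hsr⟩ := hs; obtain ⟨r', hr', htr⟩ := ht
  refine ⟨r * r', by positivity, ?_⟩
  rw [abs_mul, map_mul]
  exact mul_le_mul hsr htr (abs_nonneg _) (f_nonneg hr.le)

lemma IsInfinitesimal.add {s t : K} (hs : IsInfinitesimal f s) (ht : IsInfinitesimal f t) :
    IsInfinitesimal f (s + t) := by
  intro r hr
  have h1 := hs (r / 2) (by linarith)
  have h2 := ht (r / 2) (by linarith)
  calc |s + t| ≤ |s| + |t| := abs_add_le _ _
    _ < f (r / 2) + f (r / 2) := by gcongr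
    _ = f r := by rw [← map_add]; norm_num

lemma IsInfinitesimal.neg {s : K} (hs : IsInfinitesimal f s) : IsInfinitesimal f (-s) := by
  intro r hr; rw [abs_neg]; exact hs r hr

lemma IsInfinitesimal.mul_limited {s t : K} (hs : IsInfinitesimal f s) (ht : IsLimited f t) :
    IsInfinitesimal f (s * t) := by
  obtain ⟨r, hr, htr⟩ := ht
  intro ε hε
  have h1 := hs (ε / r) (by positivity)
  calc |s * t| = |s| * |t| := abs_mul _ _
    _ ≤ |s| * f r := by gcongr
    _ < f (ε / r) * f r := by
        exact mul_lt_mul_of_pos_right h1 (f_pos_s8 hr)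
    _ = f ε := by rw [← map_mul, div_mul_cancel₀ _ hr.ne']

lemma IsLimited.of_bounds {s A B : K} (hA : IsLimited f A) (hB : IsLimited f B)
    (h1 : s ≤ A) (h2 : -s ≤ B) : IsLimited f s := by
  obtain ⟨r, hr, hAr⟩ := hA; obtain ⟨r', hr', hBr⟩ := hB
  refine ⟨r + r', by linarith, ?_⟩
  rw [abs_le, map_add]
  constructor
  · have : -B ≤ s := by linarith
    have hB' : -f r' ≤ -B := by have := (abs_le.1 hBr).2; linarith [neg_abs_le B, (abs_le.1 hBr).2]
    have : -(f r + f r') ≤ -B := by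
      have := (abs_le.1 hBr).2
      have h3 : -B ≥ -f r' := by linarith [le_abs_self B]
      have h4 : 0 ≤ f r := f_nonneg hr.le
      linarith
    linarith
  · have : A ≤ f r := (le_abs_self A).trans hAr
    have h4 : 0 ≤ f r' := f_nonneg hr'.le
    linarith

lemma IsInfinitesimal.of_bounds {s A B : K} (hA : IsInfinitesimal f A) (hB : IsInfinitesimal f B)
    (h1 : s ≤ A) (h2 : -s ≤ B) : IsInfinitesimal f s := by
  intro r hr
  have h3 := hA (r/2) (by linarith)
  have h4 := hB (r/2) (by linarith)
  rw [abs_lt]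
  have hf : f (r/2) + f (r/2) = f r := by rw [← map_add]; norm_num
  constructor
  · have : -B ≤ s := by linarith
    have : -f (r/2) < -B := by linarith [le_abs_self B]
    nlinarith [f_pos_s8 (f := f) (show (0:ℝ) < r/2 by linarith)]
  · have : A < f (r/2) := lt_of_le_of_lt (le_abs_self A) h3
    nlinarith [f_pos_s8 (f := f) (show (0:ℝ) < r/2 by linarith)]

lemma isInfinitesimal_f_iff {r : ℝ} : IsInfinitesimal f (f r) ↔ r = 0 := by
  constructor
  · intro h
    by_contra hr
    have h1 := h |r| (abs_pos.2 hr)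
    rw [f_abs] at h1
    exact lt_irrefl _ h1
  · rintro rfl; simpa using isInfinitesimal_zero (f := f)

end basic

section stpart
variable {f : ℝ →+* K}

noncomputable def stp (f : ℝ →+* K) (s : K) : ℝ := sSup {r : ℝ | f r ≤ s}

lemma stp_set_nonempty {s : K} (hs : IsLimited f s) : {r : ℝ | f r ≤ s}.Nonempty := by
  obtain ⟨R, hR, hsR⟩ := hs
  exact ⟨-R - 1, by
    have h1 : -f R ≤ s := by linarith [neg_abs_le s, (abs_le.1 hsR).1]
    have : f (-R - 1) < f (-R) := f_lt_iff.2 (by linarith)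
    rw [map_neg] at this
    exact le_of_lt (lt_of_lt_of_le this h1)⟩

lemma stp_set_bddAbove {s : K} (hs : IsLimited f s) : BddAbove {r : ℝ | f r ≤ s} := by
  obtain ⟨R, hR, hsR⟩ := hs
  refine ⟨R, fun r hr => ?_⟩
  have h1 : s ≤ f R := (le_abs_self s).trans hsR
  exact f_le_iff.1 (le_trans hr h1)

lemma stp_spec {s : K} (hs : IsLimited f s) : IsInfinitesimal f (s - f (stp f s)) := by
  have hne := stp_set_nonempty hs
  have hbdd := stp_set_bddAbove hs
  have key : ∀ ε : ℝ, 0 < ε → |s - f (stp f s)| ≤ f ε := by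
    intro ε hε
    rw [abs_le]
    constructor
    · -- f (stp f s) - f ε ≤ s : there is r in set with stp - ε < r
      obtain ⟨r, hr, hlt⟩ := exists_lt_of_lt_csSup hne (show stp f s - ε < stp f s by linarith)
      have : f (stp f s - ε) ≤ f r := f_le_iff.2 hlt.le
      rw [map_sub] at this
      linarith [le_trans this hr]
    · -- s ≤ f stp + f ε
      have hnotin : ¬ (f (stp f s + ε) ≤ s) := by
        intro h
        have h5 : stp f s + ε ≤ stp f s := le_csSup hbdd h
        linarith
      push_neg at hnotin
      rw [map_add] at hnotin
      linarith
  intro ε hε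
  exact lt_of_le_of_lt (key (ε/2) (by linarith)) (f_lt_iff.2 (by linarith))

lemma stp_unique {s : K} {r : ℝ} (h : IsInfinitesimal f (s - f r)) : stp f s = r := by
  have hs : IsLimited f s := by
    have : IsLimited f (s - f r + f r) := h.isLimited.add (isLimited_f r)
    simpa using this
  have h2 := stp_spec hs
  have h3 : IsInfinitesimal f (f (stp f s - r)) := by
    have heq : s - f r + -(s - f (stp f s)) = f (stp f s - r) := by rw [map_sub]; ring
    rw [← heq]; exact h.add h2.neg
  have := isInfinitesimal_f_iff.1 h3
  linarith

lemma stp_of_infinitesimal {s : K} (h : IsInfinitesimal f s) : stp f s = 0 :=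
  stp_unique (by simpa using h)

lemma stp_nonneg {s : K} (hs : IsLimited f s) (h : 0 ≤ s) : 0 ≤ stp f s := by
  by_contra hneg
  push_neg at hneg
  have h1 := stp_spec hs (-(stp f s)) (by linarith)
  rw [abs_lt, map_neg] at h1
  have h2 := h1.2
  have : s - f (stp f s) < - f (stp f s) := h2
  linarith

lemma stp_ge {s : K} (hs : IsLimited f s) {ε : ℝ} (h : f ε ≤ s) : ε ≤ stp f s :=
  le_csSup (stp_set_bddAbove hs) h

lemma not_infinitesimal_elim {s : K} (h : ¬ IsInfinitesimal f s) :
    ∃ ε : ℝ, 0 < ε ∧ f ε ≤ |s| := by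
  unfold IsInfinitesimal at h
  push_neg at h
  obtain ⟨r, hr, hle⟩ := h
  exact ⟨r, hr, hle⟩

end stpart

section posCase
variable {f : ℝ →+* K} {γ : K}

lemma lim_of_mul_lim (hγ : ¬ IsInfinitesimal f γ) (hγpos : 0 < γ) {s : K}
    (h : IsLimited f (γ * s)) : IsLimited f s := by
  obtain ⟨ε, hε, hεγ⟩ := not_infinitesimal_elim hγ
  rw [abs_of_pos hγpos] at hεγ
  obtain ⟨r, hr, hrs⟩ := h
  refine ⟨r / ε, by positivity, ?_⟩
  rw [abs_mul, abs_of_pos hγpos] at hrs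
  have h1 : |s| * f ε ≤ f r := by
    calc |s| * f ε ≤ |s| * γ := by
          exact mul_le_mul_of_nonneg_left hεγ (abs_nonneg s)
      _ = γ * |s| := mul_comm _ _
      _ ≤ f r := hrs
  rw [map_div₀, le_div_iff₀ (f_pos_s8 hε)]
  exact h1

variable (f γ) in
/-- The scaled data in the non-infinitesimal case. -/
noncomputable def GPos (hγlim : IsLimited f γ) (hγpos : 0 < γ) (hne : ¬ IsInfinitesimal f γ)
    {F : Type u} (G : GalacticData K f F) : GalacticData K f F where
  δ := fun x y => if G.δ x y = ⊤ then ⊤ else ENNReal.ofReal (stp f γ * (G.δ x y).toReal)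
  Δ := fun x y => γ * G.Δ x y
  δ_self := fun x => by
    simp [G.δ_self x]
  δ_pos := fun x y hxy => by
    by_cases h : G.δ x y = ⊤
    · simp [h]
    · rw [if_neg h]
      obtain ⟨ε, hε, hεγ⟩ := not_infinitesimal_elim hne
      rw [abs_of_pos hγpos] at hεγ
      have hc : ε ≤ stp f γ := stp_ge hγlim hεγ
      have ht : 0 < (G.δ x y).toReal := ENNReal.toReal_pos (G.δ_pos x y hxy).ne' h
      exact ENNReal.ofReal_pos.2 (by nlinarith)
  δ_symm := fun x y => by rw [G.δ_symm x y]
  δ_triangle := fun x y z => by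
    by_cases hxy : G.δ x y = ⊤
    · simp [hxy]
    by_cases hyz : G.δ y z = ⊤
    · simp [hyz]
    have hxz : G.δ x z ≠ ⊤ := by
      intro h
      have := G.δ_triangle x y z
      rw [h, top_le_iff] at this
      exact (ENNReal.add_ne_top.2 ⟨hxy, hyz⟩) this
    rw [if_neg hxz, if_neg hxy, if_neg hyz, ← ENNReal.ofReal_add (mul_nonneg (stp_nonneg hγlim hγpos.le) ENNReal.toReal_nonneg) (mul_nonneg (stp_nonneg hγlim hγpos.le) ENNReal.toReal_nonneg)]
    apply ENNReal.ofReal_le_ofReal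
    have hc : 0 ≤ stp f γ := stp_nonneg hγlim hγpos.le
    have ht : (G.δ x z).toReal ≤ (G.δ x y).toReal + (G.δ y z).toReal := by
      rw [← ENNReal.toReal_add hxy hyz]
      exact ENNReal.toReal_mono (ENNReal.add_ne_top.2 ⟨hxy, hyz⟩) (G.δ_triangle x y z)
    nlinarith
  Δ_congr := fun x x' y y' hx hy => by
    have hx' : G.δ x x' ≠ ⊤ := by by_contra h; rw [if_pos h] at hx; exact hx rfl
    have hy' : G.δ y y' ≠ ⊤ := by by_contra h; rw [if_pos h] at hy; exact hy rfl
    have := hγlim.mul (G.Δ_congr x x' y y' hx' hy')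
    have heq : γ * (G.Δ x y - G.Δ x' y') = γ * G.Δ x y - γ * G.Δ x' y' := by ring
    rwa [heq] at this
  Δ_symm := fun x y => by
    have := hγlim.mul (G.Δ_symm x y)
    have heq : γ * (G.Δ x y - G.Δ y x) = γ * G.Δ x y - γ * G.Δ y x := by ring
    rwa [heq] at this
  Δ_limited_iff := fun x y => by
    constructor
    · intro h
      have := (G.Δ_limited_iff x y).1 (lim_of_mul_lim hne hγpos h)
      rw [if_neg this]
      exact ENNReal.ofReal_ne_top
    · intro h
      have hδ : G.δ x y ≠ ⊤ := by by_contra h'; rw [if_pos h'] at h; exact h rfl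
      exact hγlim.mul ((G.Δ_limited_iff x y).2 hδ)
  Δ_pos := fun x y h => by
    have hδ : G.δ x y = ⊤ := by
      by_contra h'; rw [if_neg h'] at h; exact ENNReal.ofReal_ne_top h
    exact mul_pos hγpos (G.Δ_pos x y hδ)
  Δ_triangle := fun x y z => by
    rcases G.Δ_triangle x y z with h | h
    · left
      calc γ * G.Δ x z ≤ γ * (G.Δ x y + G.Δ y z) := by
            exact mul_le_mul_of_nonneg_left h hγpos.le
        _ = γ * G.Δ x y + γ * G.Δ y z := by ring
    · right
      have := hγlim.mul h
      have heq : γ * (G.Δ x z - (G.Δ x y + G.Δ y z)) =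
          γ * G.Δ x z - (γ * G.Δ x y + γ * G.Δ y z) := by ring
      rwa [heq] at this

lemma contraction_pos (hγlim : IsLimited f γ) (hγpos : 0 < γ) (hne : ¬ IsInfinitesimal f γ)
    {F : Type u} (G : GalacticData K f F) :
    IsContraction f G (GPos f γ hγlim hγpos hne G) γ id := by
  refine ⟨Function.surjective_id, fun x y => ⟨?_, ?_, ?_⟩⟩
  · intro h
    refine ⟨by simp [GPos, if_neg h], ?_⟩
    have hto : ((GPos f γ hγlim hγpos hne G).δ x y).toReal
        = stp f γ * (G.δ x y).toReal := by
      rw [show (GPos f γ hγlim hγpos hne G).δ x y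
          = ENNReal.ofReal (stp f γ * (G.δ x y).toReal) from if_neg h]
      exact ENNReal.toReal_ofReal
        (mul_nonneg (stp_nonneg hγlim hγpos.le) ENNReal.toReal_nonneg)
    simp only [id]
    rw [hto]
    have heq : γ * f (G.δ x y).toReal - f (stp f γ * (G.δ x y).toReal)
        = (γ - f (stp f γ)) * f (G.δ x y).toReal := by
      rw [map_mul]; ring
    rw [heq]
    exact (stp_spec hγlim).mul_limited (isLimited_f _)
  · intro h
    have hnl : ¬ IsLimited f (γ * G.Δ x y) := by
      intro hl
      exact ((G.Δ_limited_iff x y).1 (lim_of_mul_lim hne hγpos hl)) h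
    refine ⟨⟨fun _ => hnl, fun _ => if_pos h⟩, fun hl => absurd hl hnl⟩
  · simp only [id]
    have : (GPos f γ hγlim hγpos hne G).Δ x y - γ * G.Δ x y = 0 := by
      simp [GPos]
    rw [this]
    exact isLimited_zero
end posCase

section infCase
variable {f : ℝ →+* K} {γ : K} {F : Type u} {G : GalacticData K f F}

lemma triE (hγ : IsInfinitesimal f γ) (hγpos : 0 < γ) (G : GalacticData K f F) (x y z : F) :
    ∃ E, IsInfinitesimal f E ∧ γ * G.Δ x z ≤ γ * G.Δ x y + γ * G.Δ y z + E := by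
  rcases G.Δ_triangle x y z with h | h
  · refine ⟨0, isInfinitesimal_zero, ?_⟩
    have := mul_le_mul_of_nonneg_left h hγpos.le
    nlinarith
  · refine ⟨γ * (G.Δ x z - (G.Δ x y + G.Δ y z)), hγ.mul_limited h, le_of_eq (by ring)⟩

lemma symmI (hγ : IsInfinitesimal f γ) (G : GalacticData K f F) (x y : F) :
    IsInfinitesimal f (γ * G.Δ x y - γ * G.Δ y x) := by
  rw [← mul_sub]
  exact hγ.mul_limited (G.Δ_symm x y)

lemma inf_swap (hγ : IsInfinitesimal f γ) {x y : F}
    (h : IsInfinitesimal f (γ * G.Δ x y)) : IsInfinitesimal f (γ * G.Δ y x) := by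
  have h2 := (symmI hγ G x y).neg
  have := h.add h2
  have heq : γ * G.Δ x y + -(γ * G.Δ x y - γ * G.Δ y x) = γ * G.Δ y x := by ring
  rwa [heq] at this

lemma lim_swap (hγ : IsInfinitesimal f γ) {x y : F}
    (h : IsLimited f (γ * G.Δ x y)) : IsLimited f (γ * G.Δ y x) := by
  have h2 := (symmI hγ G x y).neg.isLimited
  have := h.add h2
  have heq : γ * G.Δ x y + -(γ * G.Δ x y - γ * G.Δ y x) = γ * G.Δ y x := by ring
  rwa [heq] at this

lemma quadE (hγ : IsInfinitesimal f γ) (hγpos : 0 < γ) (G : GalacticData K f F) (u u' v v' : F) :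
    ∃ E, IsInfinitesimal f E ∧
      γ * G.Δ u v ≤ γ * G.Δ u u' + γ * G.Δ u' v' + γ * G.Δ v' v + E := by
  obtain ⟨E1, h1, hle1⟩ := triE hγ hγpos G u u' v
  obtain ⟨E2, h2, hle2⟩ := triE hγ hγpos G u' v' v
  exact ⟨E1 + E2, h1.add h2, by linarith⟩

lemma inf_congr (hγ : IsInfinitesimal f γ) (hγpos : 0 < γ) {u u' v v' : F}
    (h1 : IsInfinitesimal f (γ * G.Δ u u')) (h2 : IsInfinitesimal f (γ * G.Δ v v')) :
    IsInfinitesimal f (γ * G.Δ u v - γ * G.Δ u' v') := by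
  obtain ⟨E, hE, hle⟩ := quadE hγ hγpos G u u' v v'
  obtain ⟨E', hE', hle'⟩ := quadE hγ hγpos G u' u v' v
  refine IsInfinitesimal.of_bounds
    (A := γ * G.Δ u u' + γ * G.Δ v' v + E) (B := γ * G.Δ u' u + γ * G.Δ v v' + E')
    ((h1.add (inf_swap hγ h2)).add hE) (((inf_swap hγ h1).add h2).add hE')
    (by linarith) (by linarith)

lemma lim_congr (hγ : IsInfinitesimal f γ) (hγpos : 0 < γ) {u u' v v' : F}
    (h1 : IsLimited f (γ * G.Δ u u')) (h2 : IsLimited f (γ * G.Δ v v')) :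
    IsLimited f (γ * G.Δ u v - γ * G.Δ u' v') := by
  obtain ⟨E, hE, hle⟩ := quadE hγ hγpos G u u' v v'
  obtain ⟨E', hE', hle'⟩ := quadE hγ hγpos G u' u v' v
  refine IsLimited.of_bounds
    (A := γ * G.Δ u u' + γ * G.Δ v' v + E) (B := γ * G.Δ u' u + γ * G.Δ v v' + E')
    ((h1.add (lim_swap hγ h2)).add hE.isLimited) (((lim_swap hγ h1).add h2).add hE'.isLimited)
    (by linarith) (by linarith)

lemma inf_of_ne_top (hγ : IsInfinitesimal f γ) {x y : F} (h : G.δ x y ≠ ⊤) :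
    IsInfinitesimal f (γ * G.Δ x y) :=
  hγ.mul_limited ((G.Δ_limited_iff x y).2 h)

lemma IsLimited.of_sub {s t : K} (h : IsLimited f s) (h2 : IsLimited f (t - s)) :
    IsLimited f t := by
  have := h.add h2
  have heq : s + (t - s) = t := by ring
  rwa [heq] at this

lemma IsInfinitesimal.of_sub {s t : K} (h : IsInfinitesimal f s)
    (h2 : IsInfinitesimal f (t - s)) : IsInfinitesimal f t := by
  have := h.add h2
  have heq : s + (t - s) = t := by ring
  rwa [heq] at this

variable (f γ) in
def galSetoid (hγ : IsInfinitesimal f γ) (hγpos : 0 < γ) (G : GalacticData K f F) : Setoid F :=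
  ⟨fun x y => IsInfinitesimal f (γ * G.Δ x y), by
    refine ⟨fun x => inf_of_ne_top hγ (by simp [G.δ_self x]), fun h => inf_swap hγ h,
      fun {x y z} hxy hyz => ?_⟩
    obtain ⟨E, hE, hle⟩ := triE hγ hγpos G x y z
    obtain ⟨E', hE', hle'⟩ := triE hγ hγpos G x z y
    exact IsInfinitesimal.of_bounds
      (A := γ * G.Δ x y + γ * G.Δ y z + E) (B := γ * G.Δ z y + -(γ * G.Δ x y) + E')
      ((hxy.add hyz).add hE) (((inf_swap hγ hyz).add hxy.neg).add hE')
      (by linarith) (by linarith)⟩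

lemma stp_gd_nonneg (hγ : IsInfinitesimal f γ) (hγpos : 0 < γ) {u v : F}
    (h : IsLimited f (γ * G.Δ u v)) : 0 ≤ stp f (γ * G.Δ u v) := by
  by_cases hδ : G.δ u v = ⊤
  · exact stp_nonneg h (mul_pos hγpos (G.Δ_pos u v hδ)).le
  · rw [stp_of_infinitesimal (inf_of_ne_top hγ hδ)]
end infCase

section infData
variable {f : ℝ →+* K} {γ : K} {F : Type u}

open Classical in
variable (f γ) in
/-- The quotient data in the infinitesimal case. -/
noncomputable def GInf (hγ : IsInfinitesimal f γ) (hγpos : 0 < γ) (G : GalacticData K f F) :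
    GalacticData K f (Quotient (galSetoid f γ hγ hγpos G)) where
  δ := fun a b => if IsLimited f (γ * G.Δ a.out b.out) then
      ENNReal.ofReal (stp f (γ * G.Δ a.out b.out)) else ⊤
  Δ := fun a b => γ * G.Δ a.out b.out
  δ_self := fun a => by
    have h : IsInfinitesimal f (γ * G.Δ a.out a.out) :=
      (galSetoid f γ hγ hγpos G).refl a.out
    rw [if_pos h.isLimited, stp_of_infinitesimal h]
    simp
  δ_pos := fun a b hab => by
    have hne : ¬ IsInfinitesimal f (γ * G.Δ a.out b.out) := by
      intro h
      exact hab (Quotient.out_equiv_out.mp h)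
    by_cases hl : IsLimited f (γ * G.Δ a.out b.out)
    · rw [if_pos hl]
      have hδ : G.δ a.out b.out = ⊤ := by
        by_contra h
        exact hne (inf_of_ne_top hγ h)
      have hpos : 0 < γ * G.Δ a.out b.out := mul_pos hγpos (G.Δ_pos _ _ hδ)
      obtain ⟨ε, hε, hεs⟩ := not_infinitesimal_elim hne
      rw [abs_of_pos hpos] at hεs
      have := stp_ge hl hεs
      exact ENNReal.ofReal_pos.2 (by linarith)
    · rw [if_neg hl]
      exact ENNReal.zero_lt_top
  δ_symm := fun a b => by
    have hd := symmI hγ G a.out b.out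
    by_cases hl : IsLimited f (γ * G.Δ a.out b.out)
    · have hl2 : IsLimited f (γ * G.Δ b.out a.out) := lim_swap hγ hl
      rw [if_pos hl, if_pos hl2]
      have : stp f (γ * G.Δ b.out a.out) = stp f (γ * G.Δ a.out b.out) := by
        apply stp_unique
        have h1 := stp_spec hl
        have := hd.neg.add h1
        have heq : -(γ * G.Δ a.out b.out - γ * G.Δ b.out a.out) +
            (γ * G.Δ a.out b.out - f (stp f (γ * G.Δ a.out b.out)))
            = γ * G.Δ b.out a.out - f (stp f (γ * G.Δ a.out b.out)) := by ring
        rwa [heq] at this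
      rw [this]
    · have hl2 : ¬ IsLimited f (γ * G.Δ b.out a.out) := fun h => hl (lim_swap hγ h)
      rw [if_neg hl, if_neg hl2]
  δ_triangle := fun a b c => by
    by_cases hl1 : IsLimited f (γ * G.Δ a.out b.out)
    · by_cases hl2 : IsLimited f (γ * G.Δ b.out c.out)
      · -- all limited
        obtain ⟨E, hE, hle⟩ := triE hγ hγpos G a.out b.out c.out
        obtain ⟨E', hE', hle'⟩ := triE hγ hγpos G a.out c.out b.out
        have hs : IsLimited f (γ * G.Δ a.out c.out) :=
          IsLimited.of_bounds
            (A := γ * G.Δ a.out b.out + γ * G.Δ b.out c.out + E)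
            (B := γ * G.Δ c.out b.out + -(γ * G.Δ a.out b.out) + E')
            ((hl1.add hl2).add hE.isLimited)
            (((lim_swap hγ hl2).add hl1.neg).add hE'.isLimited)
            (by linarith) (by linarith)
        rw [if_pos hs, if_pos hl1, if_pos hl2]
        rw [← ENNReal.ofReal_add (stp_gd_nonneg hγ hγpos hl1) (stp_gd_nonneg hγ hγpos hl2)]
        apply ENNReal.ofReal_le_ofReal
        -- show stp s ≤ stp s₁ + stp s₂
        have h1 := stp_spec hs
        have h2 := stp_spec hl1
        have h3 := stp_spec hl2
        by_contra hgt
        push_neg at hgt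
        set d := stp f (γ * G.Δ a.out c.out) -
          (stp f (γ * G.Δ a.out b.out) + stp f (γ * G.Δ b.out c.out)) with hd
        have hdpos : 0 < d := by simp only [hd]; linarith
        have hfd : f d ≤ -(γ * G.Δ a.out c.out - f (stp f (γ * G.Δ a.out c.out)))
            + (γ * G.Δ a.out b.out - f (stp f (γ * G.Δ a.out b.out)))
            + (γ * G.Δ b.out c.out - f (stp f (γ * G.Δ b.out c.out))) + E := by
          rw [hd, map_sub, map_add]
          linarith
        have hinf : IsInfinitesimal f (-(γ * G.Δ a.out c.out - f (stp f (γ * G.Δ a.out c.out)))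
            + (γ * G.Δ a.out b.out - f (stp f (γ * G.Δ a.out b.out)))
            + (γ * G.Δ b.out c.out - f (stp f (γ * G.Δ b.out c.out))) + E) :=
          ((h1.neg.add h2).add h3).add hE
        have := lt_of_le_of_lt (hfd.trans (le_abs_self _)) (hinf d hdpos)
        exact lt_irrefl _ this
      · rw [if_neg hl2]
        simp
    · rw [if_neg hl1]
      simp
  Δ_congr := fun a a' b b' ha hb => by
    have ha' : IsLimited f (γ * G.Δ a.out a'.out) := by
      by_contra h; rw [if_neg h] at ha; exact ha rfl
    have hb' : IsLimited f (γ * G.Δ b.out b'.out) := by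
      by_contra h; rw [if_neg h] at hb; exact hb rfl
    exact lim_congr hγ hγpos ha' hb'
  Δ_symm := fun a b => by
    exact (symmI hγ G a.out b.out).isLimited
  Δ_limited_iff := fun a b => by
    constructor
    · intro h
      rw [if_pos h]
      exact ENNReal.ofReal_ne_top
    · intro h
      by_contra h'
      rw [if_neg h'] at h
      exact h rfl
  Δ_pos := fun a b h => by
    have hnl : ¬ IsLimited f (γ * G.Δ a.out b.out) := by
      intro hl
      rw [if_pos hl] at h
      exact ENNReal.ofReal_ne_top h
    have hδ : G.δ a.out b.out = ⊤ := by
      by_contra h'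
      exact hnl (inf_of_ne_top hγ h').isLimited
    exact mul_pos hγpos (G.Δ_pos _ _ hδ)
  Δ_triangle := fun a b c => by
    rcases G.Δ_triangle a.out b.out c.out with h | h
    · left
      have := mul_le_mul_of_nonneg_left h hγpos.le
      nlinarith
    · right
      have := hγ.mul_limited h
      have heq : γ * (G.Δ a.out c.out - (G.Δ a.out b.out + G.Δ b.out c.out))
          = γ * G.Δ a.out c.out - (γ * G.Δ a.out b.out + γ * G.Δ b.out c.out) := by ring
      rw [heq] at this
      exact this.isLimited
end infData

section mainProof
variable {f : ℝ →+* K} {γ : K} {F : Type u}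

lemma contraction_inf (hγ : IsInfinitesimal f γ) (hγpos : 0 < γ) (G : GalacticData K f F) :
    IsContraction f G (GInf f γ hγ hγpos G) γ
      (fun x => Quotient.mk (galSetoid f γ hγ hγpos G) x) := by
  set s := galSetoid f γ hγ hγpos G with hs
  have hout : ∀ x : F, IsInfinitesimal f (γ * G.Δ (Quotient.mk s x).out x) := fun x => by
    have h := Quotient.exact (Quotient.out_eq (Quotient.mk s x))
    exact h
  have hdiff : ∀ x y : F, IsInfinitesimal f
      (γ * G.Δ (Quotient.mk s x).out (Quotient.mk s y).out - γ * G.Δ x y) := fun x y =>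
    inf_congr hγ hγpos (hout x) (hout y)
  have hdiff2 : ∀ x y : F, IsInfinitesimal f
      (γ * G.Δ x y - γ * G.Δ (Quotient.mk s x).out (Quotient.mk s y).out) := fun x y => by
    have := (hdiff x y).neg; rwa [neg_sub] at this
  refine ⟨fun a => ⟨a.out, Quotient.out_eq a⟩, fun x y => ⟨?_, ?_, ?_⟩⟩
  · -- (a) finite distance
    intro h
    have h1 : IsInfinitesimal f (γ * G.Δ x y) := inf_of_ne_top hγ h
    have h2 : IsInfinitesimal f
        (γ * G.Δ (Quotient.mk s x).out (Quotient.mk s y).out) := h1.of_sub (hdiff x y)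
    have hval : (GInf f γ hγ hγpos G).δ (Quotient.mk s x) (Quotient.mk s y) = 0 := by
      simp only [GInf]
      rw [if_pos h2.isLimited, stp_of_infinitesimal h2]
      simp
    refine ⟨by rw [hval]; simp, ?_⟩
    rw [hval]
    simp only [ENNReal.toReal_zero, map_zero, sub_zero]
    exact hγ.mul_limited (isLimited_f _)
  · -- (b) infinite distance
    intro h
    have htrans : IsLimited f (γ * G.Δ (Quotient.mk s x).out (Quotient.mk s y).out)
        ↔ IsLimited f (γ * G.Δ x y) :=
      ⟨fun hl => hl.of_sub (hdiff2 x y).isLimited, fun hl => hl.of_sub (hdiff x y).isLimited⟩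
    constructor
    · -- the iff
      by_cases hl : IsLimited f (γ * G.Δ (Quotient.mk s x).out (Quotient.mk s y).out)
      · have : (GInf f γ hγ hγpos G).δ (Quotient.mk s x) (Quotient.mk s y)
            = ENNReal.ofReal (stp f (γ * G.Δ (Quotient.mk s x).out (Quotient.mk s y).out)) := by
          simp only [GInf]; rw [if_pos hl]
        rw [this]
        simp [ENNReal.ofReal_ne_top, htrans.mp hl]
      · have : (GInf f γ hγ hγpos G).δ (Quotient.mk s x) (Quotient.mk s y) = ⊤ := by
          simp only [GInf]; rw [if_neg hl]
        rw [this]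
        simpa using fun h' => hl (htrans.mpr h')
    · intro hl
      have hlouts : IsLimited f (γ * G.Δ (Quotient.mk s x).out (Quotient.mk s y).out) :=
        htrans.mpr hl
      have hval : (GInf f γ hγ hγpos G).δ (Quotient.mk s x) (Quotient.mk s y)
          = ENNReal.ofReal (stp f (γ * G.Δ (Quotient.mk s x).out (Quotient.mk s y).out)) := by
        simp only [GInf]; rw [if_pos hlouts]
      rw [hval, ENNReal.toReal_ofReal (stp_gd_nonneg hγ hγpos hlouts)]
      have h1 := hdiff2 x y
      have h2 := stp_spec hlouts
      have := h1.add h2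
      have heq : γ * G.Δ x y - γ * G.Δ (Quotient.mk s x).out (Quotient.mk s y).out +
          (γ * G.Δ (Quotient.mk s x).out (Quotient.mk s y).out -
            f (stp f (γ * G.Δ (Quotient.mk s x).out (Quotient.mk s y).out)))
          = γ * G.Δ x y -
            f (stp f (γ * G.Δ (Quotient.mk s x).out (Quotient.mk s y).out)) := by ring
      rwa [heq] at this
  · -- (c)
    simp only [GInf]
    exact (hdiff x y).isLimited

end mainProof

/-- Existence of `γ`-contractions of any galactic space. -/
theorem exists_contraction (f : ℝ →+* K) (hf : ¬ Function.Surjective f)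
    {F : Type u} (G : GalacticData K f F)
    (γ : K) (hγlim : IsLimited f γ) (hγpos : 0 < γ) :
    ∃ (F' : Type u) (G' : GalacticData K f F') (g : F → F'),
      IsContraction f G G' γ g := by
  by_cases hinf : IsInfinitesimal f γ
  · exact ⟨Quotient (galSetoid f γ hinf hγpos G), GInf f γ hinf hγpos G, _,
      contraction_inf hinf hγpos G⟩
  · exact ⟨F, GPos f γ hγlim hγpos hinf G, id, contraction_pos hγlim hγpos hinf G⟩
end

section
/- (Two γ-contractions of the same galactic space are isometric.) Let (δ, Δ) be galactic space data on a type F and let γ : K be limited with 0 < γ. Suppose g₁ : F → F₁ is a γ-contraction onto galactic space data (δ₁, Δ₁) on F₁, and g₂ : F → F₂ is a γ-contraction onto galactic space data (δ₂, Δ₂) on F₂. Then there exists a bijection h : F₁ → F₂ with h ∘ g₁ = g₂ which is an isometry: for all a b : F₁, δ₂ (h a) (h b) = δ₁ a b and Δ₂ (h a) (h b) - Δ₁ a b is limited. -/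
open ENNReal

variable {K : Type*} [Field K] [LinearOrder K] [IsStrictOrderedRing K]

lemma ringHom_real_strictMono (f : ℝ →+* K) : StrictMono f := by
  have hmono : Monotone f := by
    intro a b hab
    have h0 : (0:K) ≤ f (b - a) := by
      rw [← Real.sq_sqrt (sub_nonneg.mpr hab), map_pow]
      exact sq_nonneg _
    rw [map_sub, sub_nonneg] at h0
    exact h0
  exact hmono.strictMono_of_injective f.injective

lemma inf_isLimited {f : ℝ →+* K} {s : K} (h : IsInfinitesimal f s) : IsLimited f s :=
  ⟨1, one_pos, (h 1 one_pos).le⟩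

lemma lim_sub {f : ℝ →+* K} {a b : K} (ha : IsLimited f a) (hb : IsLimited f b) :
    IsLimited f (a - b) := by
  obtain ⟨r, hr, har⟩ := ha
  obtain ⟨t, ht, hbt⟩ := hb
  refine ⟨r + t, by positivity, ?_⟩
  calc |a - b| ≤ |a| + |b| := by
        rw [sub_eq_add_neg]; exact (abs_add_le _ _).trans (by rw [abs_neg])
    _ ≤ f r + f t := add_le_add har hbt
    _ = f (r + t) := (map_add f r t).symm

lemma inf_sub' {f : ℝ →+* K} {a b : K} (ha : IsInfinitesimal f a) (hb : IsInfinitesimal f b) :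
    IsInfinitesimal f (a - b) := by
  intro r hr
  calc |a - b| ≤ |a| + |b| := by
        rw [sub_eq_add_neg]; exact (abs_add_le _ _).trans (by rw [abs_neg])
    _ < f (r/2) + f (r/2) := add_lt_add (ha _ (by positivity)) (hb _ (by positivity))
    _ = f r := by rw [← map_add]; norm_num

lemma real_eq_zero_of_inf {f : ℝ →+* K} {r : ℝ} (h : IsInfinitesimal f (f r)) : r = 0 := by
  have hm := ringHom_real_strictMono f
  by_contra hr
  have habs : 0 < |r| := abs_pos.mpr hr
  have := h |r| habs
  have hfr : |f r| = f |r| := by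
    rcases abs_cases r with ⟨h1, h2⟩ | ⟨h1, h2⟩
    · rw [h1]
      exact abs_of_nonneg (by rw [← map_zero f]; exact hm.monotone h2)
    · rw [h1, map_neg]
      exact abs_of_nonpos (by rw [← map_zero f]; exact hm.monotone h2.le)
  rw [hfr] at this
  exact lt_irrefl _ this

lemma real_eq_of_inf {f : ℝ →+* K} {c : K} {t₁ t₂ : ℝ}
    (h1 : IsInfinitesimal f (c - f t₁)) (h2 : IsInfinitesimal f (c - f t₂)) : t₁ = t₂ := by
  have h := inf_sub' h1 h2
  have e : (c - f t₁) - (c - f t₂) = f (t₂ - t₁) := by rw [map_sub]; ring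
  rw [e] at h
  have := real_eq_zero_of_inf h
  linarith


lemma contraction_dist_eq (f : ℝ →+* K) {F F₁ F₂ : Type*} (G : GalacticData K f F)
    (G₁ : GalacticData K f F₁) (G₂ : GalacticData K f F₂) (γ : K)
    (g₁ : F → F₁) (g₂ : F → F₂)
    (hg₁ : IsContraction f G G₁ γ g₁) (hg₂ : IsContraction f G G₂ γ g₂) (x y : F) :
    G₂.δ (g₂ x) (g₂ y) = G₁.δ (g₁ x) (g₁ y) := by
  obtain ⟨h1a, h1b, -⟩ := hg₁.2 x y
  obtain ⟨h2a, h2b, -⟩ := hg₂.2 x y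
  by_cases hd : G.δ x y = ⊤
  · obtain ⟨hiff1, hinf1⟩ := h1b hd
    obtain ⟨hiff2, hinf2⟩ := h2b hd
    by_cases hlim : IsLimited f (γ * G.Δ x y)
    · have ht1 : G₁.δ (g₁ x) (g₁ y) ≠ ⊤ := fun h => (hiff1.mp h) hlim
      have ht2 : G₂.δ (g₂ x) (g₂ y) ≠ ⊤ := fun h => (hiff2.mp h) hlim
      have heq := real_eq_of_inf (hinf2 hlim) (hinf1 hlim)
      exact (ENNReal.toReal_eq_toReal_iff' ht2 ht1).mp heq
    · rw [hiff1.mpr hlim, hiff2.mpr hlim]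
  · obtain ⟨ht1, i1⟩ := h1a hd
    obtain ⟨ht2, i2⟩ := h2a hd
    have heq := real_eq_of_inf i2 i1
    exact (ENNReal.toReal_eq_toReal_iff' ht2 ht1).mp heq

/-- Two `γ`-contractions of the same galactic space are isometric. -/
theorem contractions_isometric (f : ℝ →+* K) (hf : ¬ Function.Surjective f)
    {F F₁ F₂ : Type*} (G : GalacticData K f F)
    (G₁ : GalacticData K f F₁) (G₂ : GalacticData K f F₂)
    (γ : K) (hγlim : IsLimited f γ) (hγpos : 0 < γ)
    (g₁ : F → F₁) (g₂ : F → F₂)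
    (hg₁ : IsContraction f G G₁ γ g₁) (hg₂ : IsContraction f G G₂ γ g₂) :
    ∃ h : F₁ → F₂, Function.Bijective h ∧ h ∘ g₁ = g₂ ∧
      ∀ a b : F₁, G₂.δ (h a) (h b) = G₁.δ a b ∧
        IsLimited f (G₂.Δ (h a) (h b) - G₁.Δ a b) := by
  have key : ∀ u v : F, G₂.δ (g₂ u) (g₂ v) = G₁.δ (g₁ u) (g₁ v) :=
    contraction_dist_eq f G G₁ G₂ γ g₁ g₂ hg₁ hg₂
  have key' : ∀ u v : F, G₁.δ (g₁ u) (g₁ v) = G₂.δ (g₂ u) (g₂ v) :=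
    contraction_dist_eq f G G₂ G₁ γ g₂ g₁ hg₂ hg₁
  have glue : ∀ u v : F, g₁ u = g₁ v → g₂ u = g₂ v := by
    intro u v huv
    have h2 := key u v
    rw [huv, G₁.δ_self] at h2
    by_contra hne
    exact (G₂.δ_pos _ _ hne).ne' h2
  set s : F₁ → F := Function.surjInv hg₁.1 with hsdef
  have hs : ∀ a, g₁ (s a) = a := Function.surjInv_eq hg₁.1
  refine ⟨fun a => g₂ (s a), ⟨?_, ?_⟩, ?_, ?_⟩
  · intro a b hab
    replace hab : g₂ (s a) = g₂ (s b) := hab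
    have h := key' (s a) (s b)
    rw [hs, hs, hab, G₂.δ_self] at h
    by_contra hne
    exact (G₁.δ_pos _ _ hne).ne' h
  · intro c
    obtain ⟨x, hx⟩ := hg₂.1 c
    exact ⟨g₁ x, by show g₂ (s (g₁ x)) = c; rw [glue _ _ (hs (g₁ x)), hx]⟩
  · funext x
    exact glue _ _ (hs (g₁ x))
  · intro a b
    constructor
    · rw [key (s a) (s b), hs, hs]
    · have l1 := (hg₁.2 (s a) (s b)).2.2
      have l2 := (hg₂.2 (s a) (s b)).2.2
      rw [hs, hs] at l1
      have h := lim_sub l2 l1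
      have e : (G₂.Δ (g₂ (s a)) (g₂ (s b)) - γ * G.Δ (s a) (s b)) -
          (G₁.Δ a b - γ * G.Δ (s a) (s b)) =
          G₂.Δ (g₂ (s a)) (g₂ (s b)) - G₁.Δ a b := by ring
      rw [e] at h
      exact h
end

section
/- Let α β : ℝ* with 0 < β ≤ α and suppose β/α is infinitesimal. Then for every ζ : X_β, the fiber π_{β,α}⁻¹({ζ}) is an open subset of X_α for the topology induced by δ_α. (Equivalently: for all x y : *X, if δ_α (π_α x) (π_α y) ≠ ⊤ then π_β x = π_β y, so each fiber is a union of metric components of X_α, which are open.) -/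
open Filter Hyperreal ENNReal

/-- The germ-wise extension of the distance of a metric space to the germ space
`*X = ((hyperfilter ℕ : Filter ℕ)).Germ X`, with values in the hyperreals. -/
noncomputable def hdist {X : Type*} [MetricSpace X]
    (x y : ((hyperfilter ℕ : Filter ℕ)).Germ X) : ℝ* :=
  Filter.Germ.map₂ dist x y

/-- The relation `x ≈_α y`: `α * *d x y` is infinitesimal. -/
def scaleRel {X : Type*} [MetricSpace X] (α : ℝ*)
    (x y : ((hyperfilter ℕ : Filter ℕ)).Germ X) : Prop :=
  Infinitesimal (α * hdist x y)

/-- The `α`-scaling `X_α` of `X`: the quotient of `*X` by `≈_α`. -/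
def Scaled (X : Type*) [MetricSpace X] (α : ℝ*) : Type _ :=
  Quot (scaleRel (X := X) α)

/-- The canonical projection `π_α : *X → X_α`. -/
def scaleProj {X : Type*} [MetricSpace X] (α : ℝ*)
    (x : ((hyperfilter ℕ : Filter ℕ)).Germ X) : Scaled X α :=
  Quot.mk (scaleRel α) x

open Topology TopologicalSpace

lemma hdist_self {X : Type*} [MetricSpace X]
    (x : ((hyperfilter ℕ : Filter ℕ)).Germ X) : hdist x x = 0 := by
  induction x using Filter.Germ.inductionOn with
  | h f => simp [hdist, Filter.Germ.map₂_coe]; rfl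


/-- If `β/α` is infinitesimal (with `0 < β ≤ α`), the fibers of the transition map
`π_{β,α} : X_α → X_β` are open: each fiber is a union of metric components of `X_α`. -/
theorem scaling_transition_fibers_open {X : Type*} [MetricSpace X]
    (α β : ℝ*) (hβ : 0 < β) (hβα : β ≤ α) (hinf : Infinitesimal (β / α))
    (δα : Scaled X α → Scaled X α → ℝ≥0∞)
    (hδα : ∀ x y : ((hyperfilter ℕ : Filter ℕ)).Germ X,
      (Infinite (α * hdist x y) → δα (scaleProj α x) (scaleProj α y) = ⊤) ∧
      (¬ Infinite (α * hdist x y) →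
        δα (scaleProj α x) (scaleProj α y) = ENNReal.ofReal (st (α * hdist x y)))) :
    (∀ x y : ((hyperfilter ℕ : Filter ℕ)).Germ X,
      δα (scaleProj α x) (scaleProj α y) ≠ ⊤ → scaleProj β x = scaleProj β y) ∧
    (∀ h : Scaled X α → Scaled X β,
      (∀ x, h (scaleProj α x) = scaleProj β x) →
      ∀ ζ : Scaled X β,
        IsOpen[generateFrom {B : Set (Scaled X α) | ∃ c r, B = {y | δα c y < r}}]
          (h ⁻¹' {ζ})) := by
  have hα : (0 : ℝ*) < α := lt_of_lt_of_le hβ hβα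
  have key : ∀ x y : ((hyperfilter ℕ : Filter ℕ)).Germ X,
      δα (scaleProj α x) (scaleProj α y) ≠ ⊤ → scaleProj β x = scaleProj β y := by
    intro x y hne
    have hni : ¬ Infinite (α * hdist x y) := by
      intro hi
      exact hne ((hδα x y).1 hi)
    obtain ⟨r, hr⟩ := exists_st_of_not_infinite hni
    have h1 : Infinitesimal ((β / α) * (α * hdist x y)) := by
      have := IsSt.mul (x := β / α) (r := 0) hinf hr
      simpa [Infinitesimal] using this
    have h2 : β * hdist x y = (β / α) * (α * hdist x y) := by
      field_simp
    exact Quot.sound (by rw [scaleRel, h2]; exact h1)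
  refine ⟨key, ?_⟩
  intro h hcomm ζ
  letI t := generateFrom {B : Set (Scaled X α) | ∃ c r, B = {y | δα c y < r}}
  have hball : ∀ c : Scaled X α, IsOpen[t] {y | δα c y < 1} :=
    fun c => GenerateOpen.basic _ ⟨c, 1, rfl⟩
  have hself : ∀ c : Scaled X α, δα c c < 1 := by
    intro c
    obtain ⟨x, rfl⟩ := Quot.exists_rep c
    have h0 : α * hdist x x = 0 := by rw [hdist_self, mul_zero]
    have hni : ¬ Infinite (α * hdist x x) := by
      rw [h0]; exact (isSt_refl_real 0).not_infinite
    show δα (scaleProj α x) (scaleProj α x) < 1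
    rw [(hδα x x).2 hni, h0,
      show st (0:ℝ*) = 0 from (isSt_refl_real 0).st_eq]
    simp
  have hsub : ∀ c ∈ h ⁻¹' {ζ}, {y | δα c y < 1} ⊆ h ⁻¹' {ζ} := by
    intro c hc y hy
    obtain ⟨x, rfl⟩ := Quot.exists_rep c
    obtain ⟨z, rfl⟩ := Quot.exists_rep y
    have : δα (scaleProj α x) (scaleProj α z) ≠ ⊤ := (hy.trans_le le_top).ne
    have heq := key x z this
    try simp only [Set.mem_preimage, Set.mem_singleton_iff] at hc ⊢
    show h (scaleProj α z) = ζ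
    have hc' : h (scaleProj α x) = ζ := hc
    rw [hcomm, ← heq, ← hcomm]
    exact hc'
  have : h ⁻¹' {ζ} = ⋃ c ∈ h ⁻¹' {ζ}, {y | δα c y < 1} := by
    ext y
    constructor
    · intro hy
      exact Set.mem_biUnion hy (hself y)
    · intro hy
      obtain ⟨c, hc, hyc⟩ := Set.mem_iUnion₂.1 hy
      exact hsub c hc hyc
  rw [this]
  exact isOpen_biUnion fun c _ => hball c
end

section
/- (Distinct chains are eventually infinitely far apart.) Let D := {α : ℝ* // 0 < α}. Let x x' : D → *X be chains, i.e. for all β ≤ α in D, both β * *d (x α) (x β) and β * *d (x' α) (x' β) are infinitesimal. Suppose the chains are distinct at some scale: there exists β ∈ D such that β * *d (x β) (x' β) is not infinitesimal. Then: (i) there exists α₀ ∈ D such that for every α ≥ α₀, the hyperreal α * *d (x α) (x' α) is infinite; and (ii) for every c : ℝ* there exists α₁ ∈ D such that for every α ≥ α₁, one has c < α * *d (x α) (x' α) and α * *d (x α) (x' α) - c is infinite (i.e. the galaxy of α * *d (x α) (x' α) tends to +∞). -/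
open Filter Hyperreal

lemma hdist_nonneg' {X : Type*} [MetricSpace X]
    (x y : ((hyperfilter ℕ : Filter ℕ)).Germ X) : 0 ≤ hdist x y := by
  induction x using Filter.Germ.inductionOn with | _ f =>
  induction y using Filter.Germ.inductionOn with | _ g =>
  rw [hdist, Filter.Germ.map₂_coe]
  exact Filter.Germ.coe_le.mpr (Eventually.of_forall fun n => dist_nonneg)

lemma hdist_comm' {X : Type*} [MetricSpace X]
    (x y : ((hyperfilter ℕ : Filter ℕ)).Germ X) : hdist x y = hdist y x := by
  induction x using Filter.Germ.inductionOn with | _ f =>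
  induction y using Filter.Germ.inductionOn with | _ g =>
  simp only [hdist, Filter.Germ.map₂_coe]
  exact Filter.Germ.coe_eq.mpr (Eventually.of_forall fun n => dist_comm _ _)

lemma hdist_triangle' {X : Type*} [MetricSpace X]
    (x y z : ((hyperfilter ℕ : Filter ℕ)).Germ X) :
    hdist x z ≤ hdist x y + hdist y z := by
  induction x using Filter.Germ.inductionOn with | _ f =>
  induction y using Filter.Germ.inductionOn with | _ g =>
  induction z using Filter.Germ.inductionOn with | _ h =>
  simp only [hdist, Filter.Germ.map₂_coe]
  exact Filter.Germ.coe_le.mpr (Eventually.of_forall fun n => dist_triangle _ _ _)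

/-- Distinct chains are eventually infinitely far apart, and the galaxy of their
mutual distance tends to `+∞`. -/
theorem distinct_chains_eventually_infinite {X : Type*} [MetricSpace X]
    (x x' : {α : ℝ* // 0 < α} → ((hyperfilter ℕ : Filter ℕ)).Germ X)
    (hx : ∀ β α : {α : ℝ* // 0 < α}, β ≤ α →
      Infinitesimal ((β : ℝ*) * hdist (x α) (x β)))
    (hx' : ∀ β α : {α : ℝ* // 0 < α}, β ≤ α →
      Infinitesimal ((β : ℝ*) * hdist (x' α) (x' β)))
    (hne : ∃ β : {α : ℝ* // 0 < α}, ¬ Infinitesimal ((β : ℝ*) * hdist (x β) (x' β))) :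
    (∃ α₀ : {α : ℝ* // 0 < α}, ∀ α, α₀ ≤ α →
      Infinite ((α : ℝ*) * hdist (x α) (x' α))) ∧
    (∀ c : ℝ*, ∃ α₁ : {α : ℝ* // 0 < α}, ∀ α, α₁ ≤ α →
      c < (α : ℝ*) * hdist (x α) (x' α) ∧
      Infinite ((α : ℝ*) * hdist (x α) (x' α) - c)) := by
  obtain ⟨β, hβ⟩ := hne
  have hd0 : ∀ α : {α : ℝ* // 0 < α}, 0 ≤ (α : ℝ*) * hdist (x α) (x' α) :=
    fun α => mul_nonneg α.2.le (hdist_nonneg' _ _)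
  obtain ⟨eps, heps, hepsle⟩ : ∃ eps : ℝ, 0 < eps ∧ (eps : ℝ*) ≤ (β : ℝ*) * hdist (x β) (x' β) := by
    by_contra h
    push_neg at h
    refine hβ (infinitesimal_def.mpr fun r hr => ⟨?_, h r hr⟩)
    calc -(r : ℝ*) < 0 := by exact_mod_cast neg_neg_of_pos hr
    _ ≤ _ := hd0 β
  -- key estimate at scale β
  have key : ∀ α : {α : ℝ* // 0 < α}, β ≤ α →
      (eps : ℝ*) / 2 < (β : ℝ*) * hdist (x α) (x' α) := by
    intro α hβα
    have h1 : hdist (x β) (x' β) ≤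
        hdist (x β) (x α) + hdist (x α) (x' α) + hdist (x' α) (x' β) := by
      calc hdist (x β) (x' β) ≤ hdist (x β) (x α) + hdist (x α) (x' β) :=
            hdist_triangle' _ _ _
      _ ≤ hdist (x β) (x α) + (hdist (x α) (x' α) + hdist (x' α) (x' β)) := by
            gcongr; exact hdist_triangle' _ _ _
      _ = _ := by ring
    have hmul : (β : ℝ*) * hdist (x β) (x' β) ≤
        (β : ℝ*) * hdist (x β) (x α) + (β : ℝ*) * hdist (x α) (x' α)
          + (β : ℝ*) * hdist (x' α) (x' β) := by
      have := mul_le_mul_of_nonneg_left h1 β.2.le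
      linarith [this, mul_add (β : ℝ*) (hdist (x β) (x α) + hdist (x α) (x' α))
        (hdist (x' α) (x' β)),
        mul_add (β : ℝ*) (hdist (x β) (x α)) (hdist (x α) (x' α))]
    rw [hdist_comm' (x β) (x α)] at hmul
    have i1 := ((infinitesimal_def.mp (hx β α hβα)) (eps / 4) (by linarith)).2
    have i2 := ((infinitesimal_def.mp (hx' β α hβα)) (eps / 4) (by linarith)).2
    push_cast at i1 i2
    linarith
  -- main quantitative statement
  have main : ∀ y : ℝ*, ∃ α₁ : {α : ℝ* // 0 < α}, ∀ α, α₁ ≤ α →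
      y < (α : ℝ*) * hdist (x α) (x' α) := by
    intro y
    set m : ℝ* := max 1 (2 * y / (eps : ℝ*)) with hm
    have hm1 : (1 : ℝ*) ≤ m := le_max_left _ _
    have hmpos : (0 : ℝ*) < m := lt_of_lt_of_le one_pos hm1
    refine ⟨⟨(β : ℝ*) * m, mul_pos β.2 hmpos⟩, fun α hα => ?_⟩
    have hα' : (β : ℝ*) * m ≤ (α : ℝ*) := hα
    have hβα : β ≤ α := by
      refine Subtype.coe_le_coe.mp (le_trans ?_ hα')
      exact le_mul_of_one_le_right β.2.le hm1
    have hk := key α hβα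
    have hβpos : (0 : ℝ*) < β := β.2
    have hepspos : (0 : ℝ*) < (eps : ℝ*) := by exact_mod_cast heps
    have hαβ : m ≤ (α : ℝ*) / (β : ℝ*) := (le_div_iff₀ hβpos).mpr (by
      rw [mul_comm]; exact hα')
    have h2 : ((α : ℝ*) / β) * ((eps : ℝ*) / 2) <
        ((α : ℝ*) / β) * ((β : ℝ*) * hdist (x α) (x' α)) :=
      mul_lt_mul_of_pos_left hk (div_pos α.2 hβpos)
    have h3 : ((α : ℝ*) / β) * ((β : ℝ*) * hdist (x α) (x' α)) =
        (α : ℝ*) * hdist (x α) (x' α) := by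
      field_simp; try ring
    have h4 : y ≤ m * ((eps : ℝ*) / 2) := by
      have : y = (2 * y / (eps : ℝ*)) * ((eps : ℝ*) / 2) := by
        field_simp; try ring
      rw [this]
      exact mul_le_mul_of_nonneg_right (le_max_right _ _) (by positivity)
    have h5 : m * ((eps : ℝ*) / 2) ≤ ((α : ℝ*) / β) * ((eps : ℝ*) / 2) :=
      mul_le_mul_of_nonneg_right hαβ (by positivity)
    linarith [h3 ▸ h2]
  have hωpos : (0 : ℝ*) < ω := by exact_mod_cast infinitePos_omega 0
  constructor
  · obtain ⟨α₀, h₀⟩ := main ω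
    exact ⟨α₀, fun α hα => Or.inl fun r => (infinitePos_omega r).trans (h₀ α hα)⟩
  · intro c
    obtain ⟨α₁, h₁⟩ := main (|c| + ω)
    refine ⟨α₁, fun α hα => ?_⟩
    have h := h₁ α hα
    have hc := le_abs_self c
    refine ⟨by linarith, Or.inl fun r => ?_⟩
    have := infinitePos_omega r
    linarith
end
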